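/- Let A be an affine hyperplane arrangement in ℂˡ and let cA be its cone in ℂ^{l+1}. Then π₁(M(cA)) is isomorphic to π₁(M(A)) × ℤ. -/

import Mathlib

/-- The complement `M(A)` of the affine arrangement in `ℂˡ` with hyperplanes
`Hᵢ = {x | φᵢ x = cᵢ}`. -/
def affComplement (l n : ℕ) (φ : Fin n → ((Fin l → ℂ) →ₗ[ℂ] ℂ)) (c : Fin n → ℂ) :
    Set (Fin l → ℂ) :=
  {x | ∀ i, φ i x ≠ c i}

/-- The complement `M(cA)` of the cone of the arrangement, an arrangement in
`ℂ^{l+1} = ℂ × ℂˡ` consisting of `{(t,x) | t = 0}` and the `{(t,x) | φᵢ x = cᵢ · t}`. -/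
def coneComplement (l n : ℕ) (φ : Fin n → ((Fin l → ℂ) →ₗ[ℂ] ℂ)) (c : Fin n → ℂ) :
    Set (ℂ × (Fin l → ℂ)) :=
  {p | p.1 ≠ 0 ∧ ∀ i, φ i p.2 ≠ c i * p.1}


open Complex unitInterval Set CategoryTheory

noncomputable section
attribute [local instance] Path.Homotopic.setoid

/-- On a compact metric space admitting a contraction to a point, every nonvanishing
continuous complex function has a continuous logarithm. -/
lemma exists_continuous_log {X : Type*} [MetricSpace X] [CompactSpace X] [Nonempty X]
    (x₀ : X) (cmap : C(I × X, X)) (hc0 : ∀ x, cmap (0, x) = x₀) (hc1 : ∀ x, cmap (1, x) = x)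
    (f : X → ℂ) (hfc : Continuous f) (hf : ∀ x, f x ≠ 0) :
    ∃ g : X → ℂ, Continuous g ∧ ∀ x, Complex.exp (g x) = f x := by
  set F : I × X → ℂ := fun p => f (cmap p) with hF
  have hFc : Continuous F := hfc.comp cmap.continuous
  have hFne : ∀ p, F p ≠ 0 := fun p => hf _
  -- minimum of |F|
  obtain ⟨p₀, -, hp₀⟩ := isCompact_univ.exists_isMinOn (univ_nonempty)
      (continuous_norm.comp hFc).continuousOn
  set m : ℝ := ‖F p₀‖ with hm
  have hmpos : 0 < m := by
    simpa [hm, norm_pos_iff] using hFne p₀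
  have hmle : ∀ p, m ≤ ‖F p‖ := fun p => hp₀ (mem_univ p)
  -- uniform continuity
  have hFu : UniformContinuous F := CompactSpace.uniformContinuous_of_continuous hFc
  obtain ⟨δ, hδpos, hδ⟩ := Metric.uniformContinuous_iff.mp hFu m hmpos
  obtain ⟨n, hn⟩ := exists_nat_one_div_lt hδpos
  set N : ℕ := n + 1 with hN
  have hNpos : (0:ℝ) < N := by positivity
  -- the subdivision points
  set u : ℕ → I := fun k => Set.projIcc 0 1 zero_le_one ((k : ℝ) / N) with hu
  have hu0 : u 0 = 0 := by
    simp [hu, Set.projIcc, Subtype.ext_iff]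
  have huN : u N = 1 := by
    have : ((N:ℝ))/N = 1 := div_self (ne_of_gt hNpos)
    simp [hu, this, Set.projIcc, Subtype.ext_iff]
  have hdist : ∀ k : ℕ, ∀ x : X, dist (u (k+1), x) ((u k, x) : I × X) < δ := by
    intro k x
    have h1 : dist (u (k+1)) (u k) ≤ dist (((k:ℝ)+1)/N) ((k:ℝ)/N) := by
      simpa [hu, Nat.cast_add] using (LipschitzWith.projIcc (zero_le_one)).dist_le_mul
        (((k:ℝ)+1)/N) ((k:ℝ)/N)
    have h2 : dist (((k:ℝ)+1)/N) ((k:ℝ)/N) = 1 / N := by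
      rw [Real.dist_eq]
      have : ((k:ℝ)+1)/N - (k:ℝ)/N = 1/N := by ring
      rw [this, abs_of_pos (by positivity)]
    have : dist (u (k+1)) (u k) < δ := lt_of_le_of_lt (h1.trans h2.le) (by simpa [hN] using hn)
    simpa [Prod.dist_eq, hδpos] using max_lt this hδpos
  -- the ratios
  have hratio : ∀ (k : ℕ) (x : X), ‖F (u (k+1), x) / F (u k, x) - 1‖ < 1 := by
    intro k x
    have h1 : ‖F (u (k+1), x) - F (u k, x)‖ < m := by
      have := hδ (hdist k x)
      simpa [Complex.dist_eq] using this
    have h2 : F (u (k+1), x) / F (u k, x) - 1 = (F (u (k+1), x) - F (u k, x)) / F (u k, x) := by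
      rw [div_sub_one (hFne _)]
    rw [h2, norm_div]
    rw [div_lt_one (lt_of_lt_of_le hmpos (hmle _))]
    exact lt_of_lt_of_le h1 (hmle _)
  have hslit : ∀ (k : ℕ) (x : X), (F (u (k+1), x) / F (u k, x)) ∈ Complex.slitPlane := by
    intro k x
    rw [Complex.mem_slitPlane_iff]
    left
    have := hratio k x
    have h1 : |(F (u (k+1), x) / F (u k, x)).re - 1| < 1 := by
      calc |(F (u (k+1), x) / F (u k, x)).re - 1|
          = |(F (u (k+1), x) / F (u k, x) - 1).re| := by rw [Complex.sub_re, Complex.one_re]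
        _ ≤ ‖F (u (k+1), x) / F (u k, x) - 1‖ := Complex.abs_re_le_norm _
        _ < 1 := this
    have := abs_lt.mp h1
    linarith [this.1]
  -- define g
  set g : X → ℂ := fun x => Complex.log (f x₀)
      + ∑ k ∈ Finset.range N, Complex.log (F (u (k+1), x) / F (u k, x)) with hg
  refine ⟨g, ?_, ?_⟩
  · apply Continuous.add continuous_const
    apply continuous_finset_sum
    intro k _
    exact Continuous.clog (Continuous.div (hFc.comp (by fun_prop)) (hFc.comp (by fun_prop))
      (fun x => hFne _)) (fun x => hslit k x)
  · intro x
    have key : ∀ j : ℕ, Complex.exp (Complex.log (f x₀)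
        + ∑ k ∈ Finset.range j, Complex.log (F (u (k+1), x) / F (u k, x))) = F (u j, x) := by
      intro j
      induction j with
      | zero => simp [hu0, hF, hc0, Complex.exp_log (hf x₀)]
      | succ j ih =>
        rw [Finset.sum_range_succ, ← add_assoc, Complex.exp_add, ih,
          Complex.exp_log (div_ne_zero (hFne _) (hFne _))]
        rw [mul_comm, div_mul_cancel₀ _ (hFne _)]
    have := key N
    rw [huN] at this
    simpa [hg, hF, hc1] using this

/-- Contraction of the interval. -/
def IShrink : C(I × I, I) where
  toFun p := Set.projIcc 0 1 zero_le_one (p.1.1 * p.2.1)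
  continuous_toFun := continuous_projIcc.comp
    ((continuous_subtype_val.comp continuous_fst).mul
      (continuous_subtype_val.comp continuous_snd))

lemma IShrink_zero (x : I) : IShrink (0, x) = 0 := by
  apply Subtype.ext
  simp [IShrink, Set.projIcc_of_mem, Set.projIcc]

lemma IShrink_one (x : I) : IShrink (1, x) = x := by
  apply Subtype.ext
  show (Set.projIcc 0 1 zero_le_one (((1:I):ℝ) * (x:ℝ)) : ℝ) = x
  have h1 : ((1:I):ℝ) = 1 := rfl
  rw [h1, one_mul, Set.projIcc_of_mem zero_le_one x.2]

lemma exists_log_I (f : I → ℂ) (hfc : Continuous f) (hf : ∀ t, f t ≠ 0) :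
    ∃ g : I → ℂ, Continuous g ∧ ∀ t, Complex.exp (g t) = f t :=
  exists_continuous_log 0 IShrink IShrink_zero IShrink_one f hfc hf

/-- Contraction of the square. -/
def IIShrink : C(I × (I × I), I × I) where
  toFun p := (IShrink (p.1, p.2.1), IShrink (p.1, p.2.2))
  continuous_toFun :=
    (IShrink.continuous.comp (continuous_fst.prodMk (continuous_fst.comp continuous_snd))).prodMk
      (IShrink.continuous.comp (continuous_fst.prodMk (continuous_snd.comp continuous_snd)))

lemma exists_log_II (f : I × I → ℂ) (hfc : Continuous f) (hf : ∀ t, f t ≠ 0) :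
    ∃ g : I × I → ℂ, Continuous g ∧ ∀ t, Complex.exp (g t) = f t :=
  exists_continuous_log ((0 : I), (0 : I)) IIShrink
    (fun x => by simp [IIShrink, IShrink_zero, Prod.ext_iff])
    (fun x => by simp [IIShrink, IShrink_one])
    f hfc hf

/-- If a continuous `D : I → ℂ` takes values in `2πiℤ`, its endpoints agree. -/
lemma endpoint_eq_of_int_valued {D : I → ℂ} (hc : Continuous D)
    (hint : ∀ t, ∃ n : ℤ, D t = n * (2 * Real.pi * Complex.I)) : D 1 = D 0 := by
  set q : unitInterval → ℝ := fun t => (D t / (2 * Real.pi * Complex.I)).re with hq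
  have hrep : ∀ t, D t = ((q t : ℝ) : ℂ) * (2 * Real.pi * Complex.I) := by
    intro t
    obtain ⟨n, hn⟩ := hint t
    have : q t = (n : ℝ) := by
      rw [hq]; simp only
      rw [hn, mul_div_cancel_right₀ _ Complex.two_pi_I_ne_zero]
      simp
    rw [this, hn]; norm_num
  have hqc : Continuous q := Complex.continuous_re.comp ((hc.div_const _))
  have hqint : ∀ t, ∃ n : ℤ, q t = (n : ℝ) := by
    intro t
    obtain ⟨n, hn⟩ := hint t
    refine ⟨n, ?_⟩
    rw [hq]; simp only
    rw [hn, mul_div_cancel_right₀ _ Complex.two_pi_I_ne_zero]; simp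
  -- show q 1 = q 0
  have hkey : q 1 = q 0 := by
    by_contra hne
    obtain ⟨n0, h0⟩ := hqint 0
    obtain ⟨n1, h1⟩ := hqint 1
    have hn01 : n0 ≠ n1 := by
      rintro rfl; exact hne (h1.trans h0.symm)
    have absurd : ∀ (a b : unitInterval) (na nb : ℤ), q a = na → q b = nb → na < nb → False := by
      intro a b na nb ha hb hlt
      have hmem : (na : ℝ) + 1/2 ∈ Set.Icc (q a) (q b) := by
        constructor
        · rw [ha]; linarith
        · rw [hb]
          have : (na : ℝ) + 1 ≤ nb := by exact_mod_cast hlt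
          linarith
      obtain ⟨t, ht⟩ := intermediate_value_univ a b hqc hmem
      obtain ⟨m, hm⟩ := hqint t
      rw [hm] at ht
      have : (m * 2 : ℤ) = na * 2 + 1 := by
        have : (m : ℝ) * 2 = na * 2 + 1 := by linarith
        exact_mod_cast this
      omega
    rcases lt_or_gt_of_ne hn01 with h | h
    · exact absurd 0 1 n0 n1 h0 h1 h
    · exact absurd 1 0 n1 n0 h1 h0 h
  rw [hrep 1, hrep 0, hkey]

/-- Difference of endpoint-gaps of two continuous logarithms of one function vanishes. -/
lemma log_gap_eq {g h : I → ℂ} (hgc : Continuous g) (hhc : Continuous h)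
    (he : ∀ t, Complex.exp (g t) = Complex.exp (h t)) : g 1 - g 0 = h 1 - h 0 := by
  have : (fun t => g t - h t) 1 = (fun t => g t - h t) 0 := by
    apply endpoint_eq_of_int_valued (hgc.sub hhc)
    intro t
    rw [← Complex.exp_eq_one_iff, Pi.sub_apply, Complex.exp_sub, he t, div_self (Complex.exp_ne_zero _)]
  simp only at this
  linear_combination this

abbrev Sstar : Set ℂ := {z : ℂ | z ≠ 0}

namespace Wind

variable {p : ↥Sstar}

lemma exists_pathLog {a b : ↥Sstar} (γ : Path a b) :
    ∃ g : I → ℂ, Continuous g ∧ ∀ t, Complex.exp (g t) = (γ t : ℂ) :=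
  exists_log_I (fun t => (γ t : ℂ)) (continuous_subtype_val.comp γ.continuous)
    (fun t => (γ t).2)

/-- A continuous logarithm along a path in `ℂ*`. -/
def pathLog {a b : ↥Sstar} (γ : Path a b) : I → ℂ := (exists_pathLog γ).choose

lemma pathLog_cont {a b : ↥Sstar} (γ : Path a b) : Continuous (pathLog γ) :=
  (exists_pathLog γ).choose_spec.1

lemma pathLog_exp {a b : ↥Sstar} (γ : Path a b) (t : I) :
    Complex.exp (pathLog γ t) = (γ t : ℂ) :=
  (exists_pathLog γ).choose_spec.2 t

lemma exists_wind (γ : Path p p) :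
    ∃ n : ℤ, pathLog γ 1 - pathLog γ 0 = n * (2 * Real.pi * Complex.I) := by
  rw [← Complex.exp_eq_one_iff, Complex.exp_sub, pathLog_exp, pathLog_exp,
    Path.source, Path.target, div_self p.2]

/-- The winding number of a loop in `ℂ*`. -/
def wind (γ : Path p p) : ℤ := (exists_wind γ).choose

lemma wind_spec (γ : Path p p) :
    pathLog γ 1 - pathLog γ 0 = wind γ * (2 * Real.pi * Complex.I) :=
  (exists_wind γ).choose_spec

lemma log_gap_eq_wind (γ : Path p p) {g : I → ℂ} (hgc : Continuous g)
    (hge : ∀ t, Complex.exp (g t) = (γ t : ℂ)) :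
    g 1 - g 0 = wind γ * (2 * Real.pi * Complex.I) := by
  rw [← wind_spec γ]
  exact log_gap_eq hgc (pathLog_cont γ) (fun t => by rw [hge t, pathLog_exp])

lemma wind_eq_of_log (γ : Path p p) {g : I → ℂ} (hgc : Continuous g)
    (hge : ∀ t, Complex.exp (g t) = (γ t : ℂ)) {n : ℤ}
    (hn : g 1 - g 0 = n * (2 * Real.pi * Complex.I)) : wind γ = n := by
  have h := log_gap_eq_wind γ hgc hge
  rw [hn] at h
  exact_mod_cast mul_right_cancel₀ Complex.two_pi_I_ne_zero h.symm

lemma wind_refl : wind (Path.refl p) = 0 := by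
  apply wind_eq_of_log _ continuous_const (g := fun _ => Complex.log p.1)
  · intro t; rw [Complex.exp_log p.2]; rfl
  · simp

lemma wind_trans (γ₁ γ₂ : Path p p) : wind (γ₁.trans γ₂) = wind γ₁ + wind γ₂ := by
  set κ : ℂ := pathLog γ₁ 1 - pathLog γ₂ 0 with hκ
  have hexpκ : Complex.exp κ = 1 := by
    rw [hκ, Complex.exp_sub, pathLog_exp, pathLog_exp, Path.source, Path.target, div_self p.2]
  set P₁ : Path (pathLog γ₁ 0) (pathLog γ₁ 1) :=
    ⟨⟨pathLog γ₁, pathLog_cont γ₁⟩, rfl, rfl⟩ with hP₁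
  set P₂ : Path (pathLog γ₁ 1) (pathLog γ₂ 1 + κ) :=
    ⟨⟨fun t => pathLog γ₂ t + κ, (pathLog_cont γ₂).add continuous_const⟩, by simp [hκ], rfl⟩
    with hP₂
  have hlog : ∀ t, Complex.exp ((P₁.trans P₂) t) = ((γ₁.trans γ₂) t : ℂ) := by
    intro t
    rw [Path.trans_apply, Path.trans_apply]
    split_ifs with h
    · exact pathLog_exp γ₁ _
    · show Complex.exp (pathLog γ₂ _ + κ) = _
      rw [Complex.exp_add, hexpκ, mul_one, pathLog_exp]
  apply wind_eq_of_log _ (P₁.trans P₂).continuous hlog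
  rw [Path.target, Path.source]
  push_cast
  linear_combination wind_spec γ₁ + wind_spec γ₂

lemma wind_homotopic (γ₀ γ₁ : Path p p) (h : Path.Homotopy γ₀ γ₁) : wind γ₀ = wind γ₁ := by
  obtain ⟨L, hLc, hLe⟩ := exists_log_II (fun q => ((h q : ↥Sstar) : ℂ))
    (continuous_subtype_val.comp h.continuous) (fun q => (h q).2)
  have hDc : Continuous (fun t : I => L (t, 1) - L (t, 0)) := by fun_prop
  have hDe : L (1, 1) - L (1, 0) = L (0, 1) - L (0, 0) := by
    have := endpoint_eq_of_int_valued hDc (fun t => by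
      rw [← Complex.exp_eq_one_iff, Complex.exp_sub, hLe, hLe]
      have h1 : h (t, 1) = γ₀.toContinuousMap 1 := h.eq_fst t (by simp)
      have h0 : h (t, 0) = γ₀.toContinuousMap 0 := h.eq_fst t (by simp)
      rw [h1, h0]
      show ((γ₀ 1 : ↥Sstar) : ℂ) / ((γ₀ 0 : ↥Sstar) : ℂ) = 1
      rw [Path.source, Path.target, div_self p.2])
    simpa using this
  have w0 : L (0, 1) - L (0, 0) = wind γ₀ * (2 * Real.pi * Complex.I) := by
    refine log_gap_eq_wind γ₀ (g := fun s => L (0, s)) (by fun_prop) (fun s => ?_)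
    rw [hLe]
    exact congrArg Subtype.val (h.apply_zero s)
  have w1 : L (1, 1) - L (1, 0) = wind γ₁ * (2 * Real.pi * Complex.I) := by
    refine log_gap_eq_wind γ₁ (g := fun s => L (1, s)) (by fun_prop) (fun s => ?_)
    rw [hLe]
    exact congrArg Subtype.val (h.apply_one s)
  have key : (wind γ₁ : ℂ) * (2 * Real.pi * Complex.I)
      = (wind γ₀ : ℂ) * (2 * Real.pi * Complex.I) := by rw [← w0, ← w1]; exact hDe
  exact_mod_cast (mul_right_cancel₀ Complex.two_pi_I_ne_zero key).symm

lemma nullhomotopic_of_wind_zero (γ : Path p p) (h : wind γ = 0) :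
    Path.Homotopic γ (Path.refl p) := by
  have hgap : pathLog γ 1 = pathLog γ 0 := by
    have := wind_spec γ
    rw [h] at this
    simpa [sub_eq_zero] using this
  refine ⟨{ toFun := fun q => (⟨Complex.exp ((1 - ((q.1 : ℝ) : ℂ)) * pathLog γ q.2
              + ((q.1 : ℝ) : ℂ) * pathLog γ 0), Complex.exp_ne_zero _⟩ : ↥Sstar)
            continuous_toFun := ?_
            map_zero_left := ?_
            map_one_left := ?_
            prop' := ?_ }⟩
  · apply Continuous.subtype_mk
    apply Complex.continuous_exp.comp
    have : Continuous (fun q : I × I => pathLog γ q.2) := (pathLog_cont γ).comp continuous_snd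
    fun_prop
  · intro s
    apply Subtype.ext
    show Complex.exp _ = ((γ s : ↥Sstar) : ℂ)
    have h0 : (((0:I) : ℝ) : ℂ) = 0 := by norm_num
    rw [h0]
    rw [show (1 - (0:ℂ)) * pathLog γ s + 0 * pathLog γ 0 = pathLog γ s by ring]
    rw [pathLog_exp]
  · intro s
    apply Subtype.ext
    show Complex.exp _ = ((Path.refl p) s : ℂ)
    have h1 : (((1:I) : ℝ) : ℂ) = 1 := by norm_num
    rw [h1]
    rw [show (1 - (1:ℂ)) * pathLog γ s + 1 * pathLog γ 0 = pathLog γ 0 by ring]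
    rw [pathLog_exp γ 0, Path.source]
    rfl
  · intro t s hs
    rcases hs with h0 | h1
    · subst h0
      apply Subtype.ext
      show Complex.exp _ = ((γ.toContinuousMap 0 : ↥Sstar) : ℂ)
      rw [show (1 - ((t : ℝ) : ℂ)) * pathLog γ 0 + ((t : ℝ) : ℂ) * pathLog γ 0
        = pathLog γ 0 by ring]
      rw [pathLog_exp]; rfl
    · rcases h1
      apply Subtype.ext
      show Complex.exp _ = ((γ.toContinuousMap 1 : ↥Sstar) : ℂ)
      rw [hgap]
      rw [show (1 - ((t : ℝ) : ℂ)) * pathLog γ 0 + ((t : ℝ) : ℂ) * pathLog γ 0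
        = pathLog γ 0 by ring]
      rw [← hgap, pathLog_exp]
      rfl

/-- The standard loop of winding number `m` based at `p`. -/
def loop (p : ↥Sstar) (m : ℤ) : Path p p where
  toFun s := ⟨p.1 * Complex.exp ((m : ℂ) * (2 * Real.pi * Complex.I) * ((s : ℝ) : ℂ)),
    mul_ne_zero p.2 (Complex.exp_ne_zero _)⟩
  continuous_toFun := by
    apply Continuous.subtype_mk
    fun_prop
  source' := by
    apply Subtype.ext
    show p.1 * _ = p.1
    norm_num
  target' := by
    apply Subtype.ext
    show p.1 * _ = p.1
    have h1 : (((1:I) : ℝ) : ℂ) = 1 := by norm_num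
    rw [h1, mul_one, Complex.exp_int_mul_two_pi_mul_I, mul_one]

lemma wind_loop (p : ↥Sstar) (m : ℤ) : wind (loop p m) = m := by
  refine wind_eq_of_log _ (g := fun s => Complex.log p.1
    + (m : ℂ) * (2 * Real.pi * Complex.I) * ((s : ℝ) : ℂ)) (by fun_prop) (fun t => ?_) ?_
  · rw [Complex.exp_add, Complex.exp_log p.2]
    rfl
  · simp only [Set.Icc.coe_one, Set.Icc.coe_zero, Complex.ofReal_one, Complex.ofReal_zero]
    ring

end Wind

open CategoryTheory in
/-- Build an automorphism in a groupoid from an endo-hom. -/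
def autOfHom {C : Type*} [Groupoid C] {x : C} (p : x ⟶ x) : Aut x :=
  ⟨p, Groupoid.inv p, Groupoid.comp_inv p, Groupoid.inv_comp p⟩

@[simp] lemma autOfHom_hom {C : Type*} [CategoryTheory.Groupoid C] {x : C} (p : x ⟶ x) :
    (autOfHom p).hom = p := rfl

namespace Wind

variable (p : ↥Sstar)

/-- Winding number on homotopy classes of loops. -/
def windQ : Path.Homotopic.Quotient p p → ℤ :=
  Quotient.lift wind (fun a b ⟨h⟩ => wind_homotopic a b h)

@[simp] lemma windQ_mk (γ : Path p p) : windQ p ⟦γ⟧ = wind γ := rfl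

lemma windQ_comp (x y : Path.Homotopic.Quotient p p) :
    windQ p (x.trans y) = windQ p x + windQ p y := by
  induction x, y using Quotient.inductionOn₂ with
  | h a b => change wind (a.trans b) = wind a + wind b; rw [wind_trans]

/-- The winding number as a homomorphism on the fundamental group of `ℂ*`. -/
def windHom : FundamentalGroup ↥Sstar p →* Multiplicative ℤ where
  toFun a := Multiplicative.ofAdd
    (windQ p (a : Path.Homotopic.Quotient p p))
  map_one' := by
    show Multiplicative.ofAdd (windQ p ⟦Path.refl p⟧) = 1
    rw [windQ_mk, wind_refl]
    rfl
  map_mul' a b := by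
    show Multiplicative.ofAdd (windQ p (Path.Homotopic.Quotient.trans b a)) = _
    rw [windQ_comp, add_comm, ofAdd_add]

lemma windHom_bijective : Function.Bijective (windHom p) := by
  constructor
  · rw [injective_iff_map_eq_one]
    intro a ha
    obtain ⟨γ, hγ⟩ := (a : Path.Homotopic.Quotient p p).exists_rep
    have h0 : wind γ = 0 := by
      have : windQ p (a : Path.Homotopic.Quotient p p) = 0 := by
        have := congrArg Multiplicative.toAdd ha
        simpa [windHom] using this
      rw [← hγ, windQ_mk] at this
      exact this
    have : (a : Path.Homotopic.Quotient p p) = ⟦Path.refl p⟧ := by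
      rw [← hγ]
      exact Quotient.sound (nullhomotopic_of_wind_zero γ h0)
    exact this
  · intro m
    refine ⟨FundamentalGroup.fromPath (⟦loop p (Multiplicative.toAdd m)⟧ :
        Path.Homotopic.Quotient p p), ?_⟩
    show Multiplicative.ofAdd (windQ p ⟦loop p (Multiplicative.toAdd m)⟧) = m
    rw [windQ_mk, wind_loop]
    rfl

/-- The fundamental group of `ℂ*` is `ℤ`. -/
def pi1Equiv : FundamentalGroup ↥Sstar p ≃* Multiplicative ℤ :=
  MulEquiv.ofBijective (windHom p) (windHom_bijective p)

end Wind


section Prod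
variable {A B : Type*} [TopologicalSpace A] [TopologicalSpace B] (a : A) (b : B)

lemma projLeft_comp {c₁ c₂ c₃ : A × B} (x : Path.Homotopic.Quotient c₁ c₂)
    (y : Path.Homotopic.Quotient c₂ c₃) :
    Path.Homotopic.projLeft (x.trans y) = (Path.Homotopic.projLeft x).trans
      (Path.Homotopic.projLeft y) := by
  conv_lhs => rw [← Path.Homotopic.prod_projLeft_projRight x,
    ← Path.Homotopic.prod_projLeft_projRight y]
  rw [show (Path.Homotopic.prod (Path.Homotopic.projLeft x) (Path.Homotopic.projRight x)).trans
      (Path.Homotopic.prod (Path.Homotopic.projLeft y) (Path.Homotopic.projRight y))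
      = Path.Homotopic.prod ((Path.Homotopic.projLeft x).trans (Path.Homotopic.projLeft y))
        ((Path.Homotopic.projRight x).trans (Path.Homotopic.projRight y)) from
    Path.Homotopic.comp_prod_eq_prod_comp _ _ _ _, Path.Homotopic.projLeft_prod]

lemma projRight_comp {c₁ c₂ c₃ : A × B} (x : Path.Homotopic.Quotient c₁ c₂)
    (y : Path.Homotopic.Quotient c₂ c₃) :
    Path.Homotopic.projRight (x.trans y) = (Path.Homotopic.projRight x).trans
      (Path.Homotopic.projRight y) := by
  conv_lhs => rw [← Path.Homotopic.prod_projLeft_projRight x,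
    ← Path.Homotopic.prod_projLeft_projRight y]
  rw [show (Path.Homotopic.prod (Path.Homotopic.projLeft x) (Path.Homotopic.projRight x)).trans
      (Path.Homotopic.prod (Path.Homotopic.projLeft y) (Path.Homotopic.projRight y))
      = Path.Homotopic.prod ((Path.Homotopic.projLeft x).trans (Path.Homotopic.projLeft y))
        ((Path.Homotopic.projRight x).trans (Path.Homotopic.projRight y)) from
    Path.Homotopic.comp_prod_eq_prod_comp _ _ _ _, Path.Homotopic.projRight_prod]

/-- The fundamental group of a product. -/
def pi1Prod : FundamentalGroup (A × B) (a, b) ≃*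
    FundamentalGroup A a × FundamentalGroup B b where
  toFun g := (FundamentalGroup.fromPath (Path.Homotopic.projLeft
                (g : Path.Homotopic.Quotient (a, b) (a, b))),
              FundamentalGroup.fromPath (Path.Homotopic.projRight
                (g : Path.Homotopic.Quotient (a, b) (a, b))))
  invFun g := FundamentalGroup.fromPath (Path.Homotopic.prod
    (g.1 : Path.Homotopic.Quotient a a) (g.2 : Path.Homotopic.Quotient b b))
  left_inv g := by
    show Path.Homotopic.prod _ _ = _
    exact Path.Homotopic.prod_projLeft_projRight (g : Path.Homotopic.Quotient (a, b) (a, b))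
  right_inv g := by
    refine Prod.ext ?_ ?_
    · exact Path.Homotopic.projLeft_prod (g.1 : Path.Homotopic.Quotient a a) (g.2 : Path.Homotopic.Quotient b b)
    · exact Path.Homotopic.projRight_prod (g.1 : Path.Homotopic.Quotient a a) (g.2 : Path.Homotopic.Quotient b b)
  map_mul' g h := by
    refine Prod.ext ?_ ?_
    · show Path.Homotopic.projLeft (Path.Homotopic.Quotient.trans h g) = _
      rw [projLeft_comp]
      rfl
    · show Path.Homotopic.projRight (Path.Homotopic.Quotient.trans h g) = _
      rw [projRight_comp]
      rfl

end Prod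

section Homeo
open FundamentalGroupoid FundamentalGroupoidFunctor
variable {A B : Type} [TopologicalSpace A] [TopologicalSpace B]

/-- Transfer of fundamental groups along a homeomorphism. -/
def pi1Homeo (h : A ≃ₜ B) (a : A) :
    FundamentalGroup A a ≃* FundamentalGroup B (h a) :=
  ((equivOfHomotopyEquiv (X := TopCat.of A) (Y := TopCat.of B)
    h.toHomotopyEquiv).fullyFaithfulFunctor.mulEquivEnd
      (FundamentalGroupoid.mk a))

end Homeo

variable (l n : ℕ) (φ : Fin n → ((Fin l → ℂ) →ₗ[ℂ] ℂ)) (c : Fin n → ℂ)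

/-- The cone complement is homeomorphic to `ℂ* × M(A)`. -/
def coneHomeo : ↥(coneComplement l n φ c) ≃ₜ ↥Sstar × ↥(affComplement l n φ c) where
  toFun p := (⟨p.1.1, p.2.1⟩, ⟨(p.1.1)⁻¹ • p.1.2, by
    intro i
    rw [map_smul, smul_eq_mul]
    intro heq
    apply p.2.2 i
    have h1 : p.1.1 ≠ 0 := p.2.1
    field_simp at heq
    rw [heq, mul_comm]⟩)
  invFun q := ⟨(q.1.1, q.1.1 • q.2.1), by
    refine ⟨q.1.2, fun i => ?_⟩
    rw [map_smul, smul_eq_mul]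
    intro heq
    exact q.2.2 i (mul_left_cancel₀ q.1.2 (heq.trans (mul_comm _ _)))⟩
  left_inv p := by
    apply Subtype.ext
    have h1 : p.1.1 ≠ 0 := p.2.1
    refine Prod.ext rfl ?_
    show p.1.1 • (p.1.1)⁻¹ • p.1.2 = p.1.2
    rw [smul_smul, mul_inv_cancel₀ h1, one_smul]
  right_inv q := by
    refine Prod.ext (Subtype.ext rfl) (Subtype.ext ?_)
    show (q.1.1)⁻¹ • q.1.1 • q.2.1 = q.2.1
    rw [smul_smul, inv_mul_cancel₀ q.1.2, one_smul]
  continuous_toFun := by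
    refine Continuous.prodMk (Continuous.subtype_mk ?_ _) (Continuous.subtype_mk ?_ _)
    · exact continuous_fst.comp continuous_subtype_val
    · exact Continuous.smul
        ((Continuous.inv₀ (continuous_fst.comp continuous_subtype_val) (fun p => p.2.1)))
        (continuous_snd.comp continuous_subtype_val)
  continuous_invFun := by
    refine Continuous.subtype_mk (Continuous.prodMk ?_ ?_) _
    · exact (continuous_subtype_val.comp continuous_fst)
    · exact Continuous.smul (continuous_subtype_val.comp continuous_fst)
        (continuous_subtype_val.comp continuous_snd)

/-- The affine complement is path-connected. -/
lemma affComplement_pathConnected :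
    ∀ a b : ↥(affComplement l n φ c), Joined a b := by
  intro a b
  set d : Fin l → ℂ := b.1 - a.1 with hd
  set Z : Set ℂ := ⋃ i : Fin n, {z : ℂ | φ i a.1 + z * φ i d = c i} with hZ
  have hZc : Z.Countable := by
    apply Set.countable_iUnion
    intro i
    rcases eq_or_ne (φ i d) 0 with h | h
    · have : {z : ℂ | φ i a.1 + z * φ i d = c i} = ∅ := by
        ext z
        simp [h, a.2 i]
      rw [this]; exact Set.countable_empty
    · have : {z : ℂ | φ i a.1 + z * φ i d = c i} ⊆ {(c i - φ i a.1) / φ i d} := by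
        intro z hz
        simp only [Set.mem_setOf_eq] at hz
        simp only [Set.mem_singleton_iff]
        field_simp
        linear_combination hz
      exact (Set.countable_singleton _).mono this
  have hrank : 1 < Module.rank ℝ ℂ := by rw [Complex.rank_real_complex]; norm_num
  have hpc : IsPathConnected Zᶜ := hZc.isPathConnected_compl_of_one_lt_rank hrank
  have h0 : (0 : ℂ) ∈ Zᶜ := by
    simp only [hZ, Set.mem_compl_iff, Set.mem_iUnion, not_exists, Set.mem_setOf_eq]
    intro i
    simpa using a.2 i
  have h1 : (1 : ℂ) ∈ Zᶜ := by
    simp only [hZ, Set.mem_compl_iff, Set.mem_iUnion, not_exists, Set.mem_setOf_eq]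
    intro i hi
    apply b.2 i
    have : φ i b.1 = φ i a.1 + φ i d := by rw [hd, map_sub]; ring
    rw [this]
    linear_combination hi
  obtain ⟨γ, hγ⟩ := (hpc.joinedIn 0 h0 1 h1)
  refine ⟨⟨⟨fun t => ⟨a.1 + (γ t) • d, ?_⟩, ?_⟩, ?_, ?_⟩⟩
  · intro i
    have hmem := hγ t
    simp only [hZ, Set.mem_compl_iff, Set.mem_iUnion, not_exists, Set.mem_setOf_eq] at hmem
    intro hcon
    apply hmem i
    rw [← hcon, map_add, map_smul, smul_eq_mul]
  · apply Continuous.subtype_mk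
    exact continuous_const.add (Continuous.smul (γ.continuous.comp continuous_id) continuous_const)
  · apply Subtype.ext
    show a.1 + ((γ 0) • d) = a.1
    rw [γ.source, zero_smul, add_zero]
  · apply Subtype.ext
    show a.1 + ((γ 1) • d) = b.1
    rw [γ.target, one_smul, hd]
    ring

end

theorem fundamental_group_of_cone
    (l n : ℕ) (φ : Fin n → ((Fin l → ℂ) →ₗ[ℂ] ℂ)) (c : Fin n → ℂ)
    (hφ : ∀ i, φ i ≠ 0)
    (hdist : Function.Injective fun i => ({x | φ i x = c i} : Set (Fin l → ℂ)))
    (x : ↥(coneComplement l n φ c)) (y : ↥(affComplement l n φ c)) :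
    Nonempty (FundamentalGroup ↥(coneComplement l n φ c) x ≃*
      FundamentalGroup ↥(affComplement l n φ c) y × Multiplicative ℤ) := by
  classical
  haveI : PathConnectedSpace ↥(affComplement l n φ c) :=
    ⟨Nonempty.intro y, affComplement_pathConnected l n φ c⟩
  let h := coneHomeo l n φ c
  let e1 : FundamentalGroup ↥(coneComplement l n φ c) x ≃*
      FundamentalGroup (↥Sstar × ↥(affComplement l n φ c)) (h x) := pi1Homeo h x
  let e2 : FundamentalGroup (↥Sstar × ↥(affComplement l n φ c)) ((h x).1, (h x).2) ≃*
      FundamentalGroup ↥Sstar (h x).1 × FundamentalGroup ↥(affComplement l n φ c) (h x).2 :=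
    pi1Prod (h x).1 (h x).2
  let e3 : FundamentalGroup ↥(affComplement l n φ c) (h x).2 ≃*
      FundamentalGroup ↥(affComplement l n φ c) y :=
    FundamentalGroup.fundamentalGroupMulEquivOfPathConnected _ _
  let e4 : FundamentalGroup ↥Sstar (h x).1 ≃* Multiplicative ℤ := Wind.pi1Equiv (h x).1
  exact ⟨e1.trans (e2.trans ((e4.prodCongr e3).trans MulEquiv.prodComm))⟩
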